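/- arXiv:1504.05880 — 2 statements merged into one kernel-verified Lean document; each statement's English description precedes it below -/
import Mathlib

section
/- Let K be an n×n positive semidefinite matrix, λ > 0, y ∈ {0,1}ⁿ, α* = (K+λI)⁻¹y, and let α̃ = α* + e where ‖e‖_∞ ≤ β. Define ŷᵢ = 0 if the i-th entry of (K+λI)α̃ is < 1/2 and ŷᵢ = 1 otherwise. Then the Hamming distance satisfies d_H(y, ŷ) ≤ 4(‖K‖ + λ)² β² n. -/
open Matrix

/-- Spectral norm of a real square matrix. -/
noncomputable def specNorm {m : Type*} [Fintype m] [DecidableEq m] (M : Matrix m m ℝ) : ℝ :=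
  ‖Matrix.toEuclideanCLM (𝕜 := ℝ) M‖

/-- Reconstruction from noisy kernel ridge regression coefficients: if
`α̃ = (K+λI)⁻¹ y + e` with `‖e‖_∞ ≤ β`, and `ŷ` is obtained by thresholding
`(K+λI) α̃` at `1/2`, then `d_H(y, ŷ) ≤ 4(‖K‖+λ)² β² n`. -/
theorem reconstruction_attack_hamming_bound (n : ℕ) (K : Matrix (Fin n) (Fin n) ℝ)
    (hK : K.PosSemidef) (lam : ℝ) (hlam : 0 < lam)
    (y : Fin n → ℝ) (hy : ∀ i, y i = 0 ∨ y i = 1)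
    (e : Fin n → ℝ) (β : ℝ) (he : ∀ i, |e i| ≤ β)
    (αt : Fin n → ℝ)
    (hαt : αt = (K + lam • (1 : Matrix (Fin n) (Fin n) ℝ))⁻¹ *ᵥ y + e)
    (yhat : Fin n → ℝ)
    (hyhat : ∀ i, yhat i =
      if ((K + lam • (1 : Matrix (Fin n) (Fin n) ℝ)) *ᵥ αt) i < 1 / 2 then 0 else 1) :
    ((Finset.univ.filter fun i => yhat i ≠ y i).card : ℝ)
      ≤ 4 * (specNorm K + lam) ^ 2 * β ^ 2 * n := by
  classical
  rcases Nat.eq_zero_or_pos n with hn | hn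
  · subst hn
    simp [Finset.univ_eq_empty]
  have hβ : 0 ≤ β := le_trans (abs_nonneg _) (he ⟨0, hn⟩)
  set M : Matrix (Fin n) (Fin n) ℝ := K + lam • 1 with hMdef
  have hMpd : M.PosDef := by
    apply Matrix.PosDef.posSemidef_add hK
    rw [smul_one_eq_diagonal]
    exact Matrix.PosDef.diagonal fun _ => hlam
  have hMinv : M * M⁻¹ = 1 :=
    Matrix.mul_nonsing_inv M ((Matrix.isUnit_iff_isUnit_det M).mp hMpd.isUnit)
  -- key algebraic identity
  have hkey : M *ᵥ αt = y + M *ᵥ e := by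
    rw [hαt, Matrix.mulVec_add, Matrix.mulVec_mulVec, hMinv, Matrix.one_mulVec]
  set v : Fin n → ℝ := M *ᵥ e with hvdef
  -- each misclassified coordinate has |v i| ≥ 1/2
  have hbad : ∀ i ∈ Finset.univ.filter fun i => yhat i ≠ y i, (1/2 : ℝ)^2 ≤ (v i)^2 := by
    intro i hi
    rw [Finset.mem_filter] at hi
    have hvi : (M *ᵥ αt) i = y i + v i := by rw [hkey]; rfl
    have h2 : (1/2 : ℝ) ≤ |v i| := by
      rcases hy i with h0 | h1
      · have : ¬ ((M *ᵥ αt) i < 1/2) := by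
          intro h; exact hi.2 (by rw [hyhat i, if_pos h, h0])
        have : (1/2 : ℝ) ≤ y i + v i := by rw [← hvi]; linarith [not_lt.mp this]
        rw [h0] at this
        calc (1/2 : ℝ) ≤ v i := by linarith
          _ ≤ |v i| := le_abs_self _
      · have : (M *ᵥ αt) i < 1/2 := by
          by_contra h; exact hi.2 (by rw [hyhat i, if_neg h, h1])
        rw [hvi, h1] at this
        calc (1/2 : ℝ) ≤ -(v i) := by linarith
          _ ≤ |v i| := neg_le_abs _
    calc (1/2 : ℝ)^2 ≤ |v i|^2 := by
          apply pow_le_pow_left₀ (by norm_num) h2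
      _ = (v i)^2 := sq_abs _
  -- sum bound
  have hsum1 : ((Finset.univ.filter fun i => yhat i ≠ y i).card : ℝ) * (1/2)^2
      ≤ ∑ i, (v i)^2 := by
    calc ((Finset.univ.filter fun i => yhat i ≠ y i).card : ℝ) * (1/2)^2
        = ∑ _i ∈ Finset.univ.filter fun i => yhat i ≠ y i, (1/2 : ℝ)^2 := by
          rw [Finset.sum_const, nsmul_eq_mul]
      _ ≤ ∑ i ∈ Finset.univ.filter fun i => yhat i ≠ y i, (v i)^2 :=
          Finset.sum_le_sum hbad
      _ ≤ ∑ i, (v i)^2 :=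
          Finset.sum_le_sum_of_subset_of_nonneg (Finset.filter_subset _ _)
            (fun i _ _ => sq_nonneg _)
  -- spectral norm bound
  set T := Matrix.toEuclideanCLM (𝕜 := ℝ) M with hTdef
  have hTnorm : ‖T‖ ≤ specNorm K + lam := by
    have h1 : T = Matrix.toEuclideanCLM (𝕜 := ℝ) K
        + lam • (1 : EuclideanSpace ℝ (Fin n) →L[ℝ] EuclideanSpace ℝ (Fin n)) := by
      rw [hTdef, hMdef, map_add, _root_.map_smul, _root_.map_one]
    rw [h1]
    calc ‖Matrix.toEuclideanCLM (𝕜 := ℝ) K + lam • 1‖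
        ≤ ‖Matrix.toEuclideanCLM (𝕜 := ℝ) K‖ + ‖lam • (1 : EuclideanSpace ℝ (Fin n) →L[ℝ] EuclideanSpace ℝ (Fin n))‖ :=
          norm_add_le _ _
      _ ≤ specNorm K + lam := by
          apply add_le_add le_rfl
          rw [norm_smul (α := ℝ) lam (1 : EuclideanSpace ℝ (Fin n) →L[ℝ] EuclideanSpace ℝ (Fin n)), Real.norm_eq_abs, abs_of_pos hlam]
          calc lam * ‖(1 : EuclideanSpace ℝ (Fin n) →L[ℝ] EuclideanSpace ℝ (Fin n))‖
              ≤ lam * 1 := by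
                apply mul_le_mul_of_nonneg_left _ hlam.le
                rw [ContinuousLinearMap.one_def]
                exact ContinuousLinearMap.norm_id_le
            _ = lam := mul_one lam
  -- Euclidean vectors
  set E : EuclideanSpace ℝ (Fin n) := (WithLp.equiv 2 _).symm e with hEdef
  have hTE : T E = (WithLp.equiv 2 _).symm v := by
    rw [hTdef, hEdef, WithLp.equiv_symm_apply, Matrix.toEuclideanCLM_toLp]
  have hVnorm : ‖T E‖^2 = ∑ i, (v i)^2 := by
    rw [hTE, EuclideanSpace.norm_eq, Real.sq_sqrt (Finset.sum_nonneg fun i _ => sq_nonneg _)]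
    congr 1; ext i; rw [Real.norm_eq_abs, sq_abs]; rfl
  have hEnorm : ‖E‖^2 ≤ n * β^2 := by
    rw [hEdef, EuclideanSpace.norm_eq, Real.sq_sqrt (Finset.sum_nonneg fun i _ => sq_nonneg _)]
    calc ∑ i, ‖e i‖^2 ≤ ∑ _i : Fin n, β^2 := by
          apply Finset.sum_le_sum
          intro i _
          rw [Real.norm_eq_abs]
          exact pow_le_pow_left₀ (abs_nonneg _) (he i) 2
      _ = n * β^2 := by rw [Finset.sum_const, nsmul_eq_mul, Finset.card_univ, Fintype.card_fin]
  have hC : (0:ℝ) ≤ specNorm K + lam := le_trans (norm_nonneg _) hTnorm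
  have h3 : ‖T E‖ ≤ (specNorm K + lam) * ‖E‖ :=
    le_trans (T.le_opNorm E) (mul_le_mul_of_nonneg_right hTnorm (norm_nonneg _))
  have h4 : ‖T E‖^2 ≤ (specNorm K + lam)^2 * ‖E‖^2 := by
    calc ‖T E‖^2 ≤ ((specNorm K + lam) * ‖E‖)^2 :=
          pow_le_pow_left₀ (norm_nonneg _) h3 2
      _ = (specNorm K + lam)^2 * ‖E‖^2 := by ring
  have h5 : ∑ i, (v i)^2 ≤ (specNorm K + lam)^2 * (n * β^2) := by
    rw [← hVnorm]
    exact le_trans h4 (mul_le_mul_of_nonneg_left hEnorm (sq_nonneg _))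
  nlinarith [hsum1, h5]
end

section
/- Let x₁,…,xₙ ∈ ℝ^d be independent centered subgaussian random vectors with uniformly bounded ψ₂-norms, and let K_g[i,j] = exp(−a‖xᵢ−xⱼ‖²). If a < c₁/d for a suitable constant c₁ > 0, then there exist constants c₀, c₀′ > 0 such that Pr[‖K_g‖ ≥ c₀ n] ≥ 1 − exp(−c₀′ n). -/
open MeasureTheory ProbabilityTheory Real
open scoped RealInnerProductSpace ENNReal

/-- A random vector `x` in `ℝ^d` is subgaussian with constant `Kc` if every one-dimensional
marginal `⟨x, u⟩`, for a unit vector `u`, has subgaussian tails with constant `Kc`. -/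
def IsSubgaussianVec {Ω : Type*} [MeasureSpace Ω] {d : ℕ} (Kc : ℝ)
    (x : Ω → EuclideanSpace ℝ (Fin d)) : Prop :=
  ∀ u : EuclideanSpace ℝ (Fin d), ‖u‖ = 1 → ∀ t : ℝ, 0 < t →
    (ℙ : Measure Ω) {ω | t < |⟪x ω, u⟫|} ≤ ENNReal.ofReal (2 * Real.exp (-t ^ 2 / Kc ^ 2))


lemma packing_card_le {d : ℕ} (s : Finset (EuclideanSpace ℝ (Fin d)))
    (h1 : ∀ v ∈ s, ‖v‖ = 1)
    (hsep : ∀ u ∈ s, ∀ v ∈ s, u ≠ v → 1/2 ≤ dist u v) : s.card ≤ 5 ^ d := by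
  classical
  set B : ℝ≥0∞ := volume (Metric.ball (0 : EuclideanSpace ℝ (Fin d)) 1) with hBdef
  have hBpos : 0 < B := Metric.measure_ball_pos _ _ (by norm_num)
  have hBtop : B ≠ ⊤ := measure_ball_lt_top.ne
  have hfr : Module.finrank ℝ (EuclideanSpace ℝ (Fin d)) = d := finrank_euclideanSpace_fin
  have hdisj : Set.PairwiseDisjoint (↑s)
      (fun v : EuclideanSpace ℝ (Fin d) => Metric.ball v (1/4)) := by
    intro u hu v hv huv
    apply Metric.ball_disjoint_ball
    have := hsep u hu v hv huv
    linarith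
  have hmeas := measure_biUnion_finset (μ := volume) hdisj (fun v _ => measurableSet_ball)
  have hball : ∀ v : EuclideanSpace ℝ (Fin d),
      volume (Metric.ball v (1/4)) = ENNReal.ofReal ((1/4:ℝ) ^ d) * B := by
    intro v
    rw [Measure.addHaar_ball_of_pos volume v (by norm_num : (0:ℝ) < 1/4), hfr]
  have hsub : (⋃ v ∈ s, Metric.ball v (1/4)) ⊆
      Metric.ball (0 : EuclideanSpace ℝ (Fin d)) (5/4) := by
    intro y hy
    simp only [Set.mem_iUnion] at hy
    obtain ⟨v, hv, hyv⟩ := hy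
    rw [Metric.mem_ball] at *
    have h1v := h1 v hv
    have htri : dist y (0 : EuclideanSpace ℝ (Fin d)) ≤ dist y v + dist v 0 := dist_triangle _ _ _
    have h2 : dist v (0 : EuclideanSpace ℝ (Fin d)) = 1 := by rw [dist_zero_right, h1v]
    linarith
  have hb2 : volume (Metric.ball (0 : EuclideanSpace ℝ (Fin d)) (5/4))
      = ENNReal.ofReal ((5/4:ℝ)^d) * B := by
    rw [Measure.addHaar_ball_of_pos volume _ (by norm_num : (0:ℝ) < 5/4), hfr]
  have hle : (s.card : ℝ≥0∞) * ENNReal.ofReal ((1/4:ℝ)^d) * B ≤ ENNReal.ofReal ((5/4:ℝ)^d) * B := by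
    calc (s.card : ℝ≥0∞) * ENNReal.ofReal ((1/4:ℝ)^d) * B
        = ∑ v ∈ s, volume (Metric.ball v (1/4)) := by
          rw [Finset.sum_congr rfl (fun v _ => hball v), Finset.sum_const, nsmul_eq_mul, mul_assoc]
      _ = volume (⋃ v ∈ s, Metric.ball v (1/4)) := hmeas.symm
      _ ≤ volume (Metric.ball (0 : EuclideanSpace ℝ (Fin d)) (5/4)) := measure_mono hsub
      _ = ENNReal.ofReal ((5/4:ℝ)^d) * B := hb2
  have hle2 : (s.card : ℝ≥0∞) * ENNReal.ofReal ((1/4:ℝ)^d) ≤ ENNReal.ofReal ((5/4:ℝ)^d) :=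
    (ENNReal.mul_le_mul_iff_left hBpos.ne' hBtop).mp hle
  have hreal : (s.card : ℝ) * (1/4:ℝ)^d ≤ (5/4:ℝ)^d := by
    have := hle2
    rw [← ENNReal.ofReal_natCast, ← ENNReal.ofReal_mul (by positivity)] at this
    rw [ENNReal.ofReal_le_ofReal_iff (by positivity)] at this
    exact this
  have h5 : ((5:ℝ)/4)^d = 5^d * (1/4:ℝ)^d := by
    rw [← mul_pow]; norm_num
  rw [h5] at hreal
  have hq : (0:ℝ) < (1/4:ℝ)^d := by positivity
  have : (s.card : ℝ) ≤ 5^d := le_of_mul_le_mul_right (by linarith) hq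
  exact_mod_cast this

lemma exists_net (d : ℕ) : ∃ N : Finset (EuclideanSpace ℝ (Fin d)),
    N.card ≤ 5 ^ d ∧ (∀ v ∈ N, ‖v‖ = 1) ∧
    ∀ (x : EuclideanSpace ℝ (Fin d)) (R : ℝ), 0 ≤ R → R < ‖x‖ →
      ∃ v ∈ N, R / 2 < ⟪x, v⟫ := by
  classical
  set Q : ℕ → Prop := fun k => ∃ s : Finset (EuclideanSpace ℝ (Fin d)),
    ((∀ v ∈ s, ‖v‖ = 1) ∧ ∀ u ∈ s, ∀ v ∈ s, u ≠ v → 1/2 ≤ dist u v) ∧ s.card = k with hQ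
  have hQ0 : Q 0 := ⟨∅, ⟨by simp, by simp⟩, rfl⟩
  have hk₀ : Q (Nat.findGreatest Q (5 ^ d)) :=
    Nat.findGreatest_spec (Nat.zero_le _) hQ0
  obtain ⟨N, ⟨hNunit, hNsep⟩, hNcard⟩ := hk₀
  have hNle : N.card ≤ 5 ^ d := hNcard ▸ Nat.findGreatest_le _
  refine ⟨N, hNle, hNunit, ?_⟩
  intro x R hR hRx
  have hxpos : 0 < ‖x‖ := lt_of_le_of_lt hR hRx
  set u : EuclideanSpace ℝ (Fin d) := ‖x‖⁻¹ • x with hu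
  have hunorm : ‖u‖ = 1 := by
    rw [hu, norm_smul, norm_inv, norm_norm, inv_mul_cancel₀ hxpos.ne']
  have hclose : ∃ v ∈ N, dist u v < 1/2 := by
    by_contra hcon
    push_neg at hcon
    have huN : u ∉ N := by
      intro hm
      have := hcon u hm
      simp at this
      linarith
    have hQ1 : Q (N.card + 1) := by
      refine ⟨insert u N, ⟨?_, ?_⟩, by rw [Finset.card_insert_of_notMem huN]⟩
      · intro v hv
        rcases Finset.mem_insert.mp hv with h | h
        · rw [h]; exact hunorm
        · exact hNunit v h
      · intro a ha b hb hab
        rcases Finset.mem_insert.mp ha with h | h <;>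
          rcases Finset.mem_insert.mp hb with h' | h'
        · exact absurd (h.trans h'.symm) hab
        · rw [h]; exact hcon b h'
        · rw [h', dist_comm]; exact hcon a h
        · exact hNsep a h b h' hab
    obtain ⟨s, hs, hscard⟩ := hQ1
    have : N.card + 1 ≤ 5 ^ d := hscard ▸ packing_card_le s hs.1 hs.2
    exact Nat.findGreatest_is_greatest (by omega : Nat.findGreatest Q (5^d) < N.card + 1)
      this ⟨s, hs, hscard⟩
  obtain ⟨v, hvN, hdist⟩ := hclose
  refine ⟨v, hvN, ?_⟩
  have hv1 : ‖v‖ = 1 := hNunit v hvN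
  have hsq : ‖u - v‖^2 = ‖u‖^2 - 2 * ⟪u, v⟫ + ‖v‖^2 := norm_sub_sq_real u v
  have hduv : ‖u - v‖ < 1/2 := by rwa [← dist_eq_norm]
  have huv78 : (7:ℝ)/8 ≤ ⟪u, v⟫ := by
    have h1 : ‖u - v‖^2 < 1/4 := by
      have h0 : (0:ℝ) ≤ ‖u - v‖ := norm_nonneg _
      nlinarith
    rw [hunorm, hv1] at hsq
    nlinarith
  have hxv : ⟪x, v⟫ = ‖x‖ * ⟪u, v⟫ := by
    have : x = ‖x‖ • u := by
      rw [hu, smul_smul, mul_inv_cancel₀ hxpos.ne', one_smul]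
    conv_lhs => rw [this]
    exact real_inner_smul_left _ _ _
  rw [hxv]
  nlinarith

lemma le_specNorm_of_subset {n : ℕ} (M : Matrix (Fin n) (Fin n) ℝ) (S : Finset (Fin n))
    (hS : S.Nonempty) {c : ℝ} (hc : 0 ≤ c) (h : ∀ i ∈ S, ∀ j ∈ S, c ≤ M i j) :
    c * S.card ≤ specNorm M := by
  classical
  set f : Fin n → ℝ := fun i => if i ∈ S then (1:ℝ) else 0 with hf
  set v : EuclideanSpace ℝ (Fin n) := (WithLp.equiv 2 _).symm f with hv
  set T := Matrix.toEuclideanCLM (𝕜 := ℝ) M with hT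
  have hvi : ∀ i, v i = f i := fun i => rfl
  have hvv : ⟪v, v⟫ = (S.card : ℝ) := by
    rw [PiLp.inner_apply]
    simp only [RCLike.inner_apply, conj_trivial]
    have hterm : ∀ i, v i * v i = if i ∈ S then (1:ℝ) else 0 := by
      intro i; rw [hvi, hf]; by_cases hi : i ∈ S <;> simp [hi]
    rw [Finset.sum_congr rfl fun i _ => hterm i, Finset.sum_ite_mem, Finset.univ_inter,
      Finset.sum_const, nsmul_eq_mul, mul_one]
  have hTv : ∀ i, T v i = ∑ j ∈ S, M i j := by
    intro i
    have hcoord : T v i = (M.mulVec f) i := by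
      have h1 := Matrix.ofLp_toEuclideanCLM (n := Fin n) (𝕜 := ℝ) M v
      have h2 : (WithLp.equiv 2 ((_ : Fin n) → ℝ)) ((Matrix.toEuclideanCLM (𝕜 := ℝ) M) v) i
          = T v i := rfl
      exact congrFun h1 i
    rw [hcoord]
    simp only [Matrix.mulVec, dotProduct, hf]
    have hterm : ∀ j, M i j * (if j ∈ S then (1:ℝ) else 0) = if j ∈ S then M i j else 0 := by
      intro j; split <;> simp
    rw [Finset.sum_congr rfl fun j _ => hterm j, Finset.sum_ite_mem, Finset.univ_inter]
  have hinner : ⟪T v, v⟫ = ∑ i ∈ S, ∑ j ∈ S, M i j := by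
    rw [PiLp.inner_apply]
    simp only [RCLike.inner_apply, conj_trivial]
    have hterm : ∀ i, T v i * v i = if i ∈ S then ∑ j ∈ S, M i j else 0 := by
      intro i; rw [hvi, hf, hTv i]; by_cases hi : i ∈ S <;> simp [hi]
    rw [Finset.sum_congr rfl fun i _ => (mul_comm _ _).trans (hterm i), Finset.sum_ite_mem, Finset.univ_inter]
  have hlow : c * S.card * S.card ≤ ⟪T v, v⟫ := by
    rw [hinner]
    calc c * S.card * S.card = ∑ _i ∈ S, ∑ _j ∈ S, c := by
          simp [Finset.sum_const, nsmul_eq_mul]; ring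
      _ ≤ ∑ i ∈ S, ∑ j ∈ S, M i j :=
          Finset.sum_le_sum (fun i hi => Finset.sum_le_sum (fun j hj => h i hi j hj))
  have hnv : ‖v‖^2 = (S.card : ℝ) := by
    rw [← real_inner_self_eq_norm_sq]; exact hvv
  have hup : ⟪T v, v⟫ ≤ ‖T‖ * ‖v‖^2 := by
    calc ⟪T v, v⟫ ≤ ‖T v‖ * ‖v‖ := real_inner_le_norm _ _
      _ ≤ (‖T‖ * ‖v‖) * ‖v‖ := by
          have h1 := T.le_opNorm v
          have h0 : (0:ℝ) ≤ ‖v‖ := norm_nonneg _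
          nlinarith [norm_nonneg (T v)]
      _ = ‖T‖ * ‖v‖^2 := by ring
  rw [hnv] at hup
  have hcard : (0:ℝ) < S.card := by exact_mod_cast Finset.card_pos.mpr hS
  exact le_of_mul_le_mul_right (le_trans hlow hup) hcard

/-- Lower bound for the spectral norm of a Gaussian kernel random matrix when the bandwidth
is small: if `a < c₁/d`, then `‖K_g‖ ≥ c₀ n` with probability at least `1 − exp(−c₀′ n)`. -/
theorem specNorm_gaussian_kernel_lower :
    ∀ Kc : ℝ, 0 < Kc → ∃ c₁ c₀ c₀' : ℝ, 0 < c₁ ∧ 0 < c₀ ∧ 0 < c₀' ∧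
      ∀ (n d : ℕ) (a : ℝ) (Ω : Type) (_ : MeasureSpace Ω),
        IsProbabilityMeasure (ℙ : Measure Ω) →
        ∀ X : Fin n → Ω → EuclideanSpace ℝ (Fin d),
          iIndepFun X ℙ →
          (∀ i, ∫ ω, X i ω = 0) →
          (∀ i, IsSubgaussianVec Kc (X i)) →
          0 < a → a < c₁ / d →
          1 - ENNReal.ofReal (Real.exp (-c₀' * n))
            ≤ (ℙ : Measure Ω) {ω | c₀ * n ≤ specNorm (Matrix.of fun i j : Fin n =>
                Real.exp (-a * ‖X i ω - X j ω‖ ^ 2))} := by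
  intro Kc hKc
  set C : ℝ := 4 * Kc ^ 2 * (Real.log 5 + 3) with hCdef
  have hlog5 : 0 < Real.log 5 := Real.log_pos (by norm_num)
  have hCpos : 0 < C := by
    apply mul_pos (by positivity) (by linarith)
  have hlog2 : Real.log 2 < 1 := by
    rw [Real.log_lt_iff_lt_exp (by norm_num)]
    calc (2:ℝ) < 2.7182818283 := by norm_num
      _ < Real.exp 1 := Real.exp_one_gt_d9
  refine ⟨1 / (4 * C), Real.exp (-1) / 2, 3 * (1 - Real.log 2) / 2,
    by positivity, by positivity, by linarith, ?_⟩
  intro n d a Ω mΩ hprob X hindep hmean hsub ha had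
  -- d ≥ 1
  have hd : 1 ≤ d := by
    by_contra hd0
    have hd' : d = 0 := by omega
    rw [hd'] at had
    simp at had
    linarith
  have hdR : (1:ℝ) ≤ (d:ℝ) := by exact_mod_cast hd
  -- n = 0 case
  rcases Nat.eq_zero_or_pos n with hn0 | hn
  · subst hn0
    simp
  have hnR : (1:ℝ) ≤ (n:ℝ) := by exact_mod_cast hn
  obtain ⟨N, hNcard, hNunit, hNnet⟩ := exists_net d
  set R : ℝ := Real.sqrt (C * d) with hRdef
  have hCd : (0:ℝ) < C * d := by nlinarith
  have hRpos : 0 < R := Real.sqrt_pos.mpr hCd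
  set B : Fin n → Set Ω := fun i => {ω | R < ‖X i ω‖} with hB
  set q : ℝ := 2 * Real.exp (-3) with hqdef
  have hqpos : 0 < q := by positivity
  -- single bad probability
  have hq : ∀ i, (ℙ : Measure Ω) (B i) ≤ ENNReal.ofReal q := by
    intro i
    have hcover : B i ⊆ ⋃ v ∈ N, {ω | R / 2 < |⟪X i ω, v⟫|} := by
      intro ω hω
      obtain ⟨v, hvN, hv⟩ := hNnet (X i ω) R hRpos.le hω
      exact Set.mem_biUnion hvN (lt_of_lt_of_le hv (le_abs_self _))
    have h1 : (ℙ : Measure Ω) (B i) ≤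
        ∑ v ∈ N, (ℙ : Measure Ω) {ω | R / 2 < |⟪X i ω, v⟫|} :=
      le_trans (measure_mono hcover) (measure_biUnion_finset_le _ _)
    have h2 : ∀ v ∈ N, (ℙ : Measure Ω) {ω | R / 2 < |⟪X i ω, v⟫|} ≤
        ENNReal.ofReal (2 * Real.exp (-(R/2) ^ 2 / Kc ^ 2)) := by
      intro v hv
      exact hsub i v (hNunit v hv) (R/2) (by positivity)
    have h3 : (ℙ : Measure Ω) (B i) ≤
        (N.card : ℝ≥0∞) * ENNReal.ofReal (2 * Real.exp (-(R/2) ^ 2 / Kc ^ 2)) := by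
      refine le_trans h1 (le_trans (Finset.sum_le_sum h2) ?_)
      rw [Finset.sum_const, nsmul_eq_mul]
    refine le_trans h3 ?_
    have hcast : (N.card : ℝ≥0∞) ≤ ((5 ^ d : ℕ) : ℝ≥0∞) := by exact_mod_cast hNcard
    refine le_trans (mul_le_mul_left hcast _) ?_
    rw [← ENNReal.ofReal_natCast, ← ENNReal.ofReal_mul (by positivity)]
    apply ENNReal.ofReal_le_ofReal
    -- real inequality
    have hRsq : R ^ 2 = C * d := Real.sq_sqrt hCd.le
    have hexpo : -(R/2) ^ 2 / Kc ^ 2 = -((Real.log 5 + 3) * d) := by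
      have h4 : (R/2) ^ 2 = C * d / 4 := by rw [div_pow, hRsq]; norm_num
      rw [h4, hCdef]
      field_simp
    rw [hexpo]
    have h5d : ((5 ^ d : ℕ) : ℝ) = Real.exp (Real.log 5 * d) := by
      push_cast
      rw [mul_comm, Real.exp_nat_mul, Real.exp_log (by norm_num : (0:ℝ) < 5)]
    rw [h5d, hqdef]
    have hmul : Real.exp (Real.log 5 * d) * (2 * Real.exp (-((Real.log 5 + 3) * d)))
        = 2 * Real.exp (-(3 * d)) := by
      rw [mul_comm (Real.exp _), mul_assoc, ← Real.exp_add]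
      ring_nf
    rw [hmul]
    have : Real.exp (-(3 * (d:ℝ))) ≤ Real.exp (-3) := by
      apply Real.exp_le_exp.mpr; nlinarith
    linarith
  classical
  set k : ℕ := (n + 1) / 2 with hkdef
  have hkn : k ≤ n := by omega
  have hk2 : (n:ℝ) ≤ 2 * k := by
    have : n ≤ 2 * k := by omega
    exact_mod_cast this
  set Ebad : Set Ω := ⋃ S ∈ Finset.powersetCard k (Finset.univ : Finset (Fin n)),
    ⋂ i ∈ S, B i with hEdef
  -- measure of Ebad
  have hGmeas : MeasurableSet {x : EuclideanSpace ℝ (Fin d) | R < ‖x‖} :=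
    (isOpen_lt continuous_const continuous_norm).measurableSet
  have hEbad : (ℙ : Measure Ω) Ebad ≤
      ENNReal.ofReal (Real.exp (-(3 * (1 - Real.log 2) / 2) * n)) := by
    have hstep1 : (ℙ : Measure Ω) Ebad ≤
        ∑ S ∈ Finset.powersetCard k (Finset.univ : Finset (Fin n)),
          (ℙ : Measure Ω) (⋂ i ∈ S, B i) := measure_biUnion_finset_le _ _
    have hstep2 : ∀ S ∈ Finset.powersetCard k (Finset.univ : Finset (Fin n)),
        (ℙ : Measure Ω) (⋂ i ∈ S, B i) ≤ ENNReal.ofReal q ^ k := by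
      intro S hS
      obtain ⟨-, hScard⟩ := Finset.mem_powersetCard.mp hS
      have hprod : (ℙ : Measure Ω) (⋂ i ∈ S, B i) = ∏ i ∈ S, (ℙ : Measure Ω) (B i) :=
        hindep.meas_biInter (fun i _ => ⟨{x | R < ‖x‖}, hGmeas, rfl⟩)
      rw [hprod, ← hScard]
      calc ∏ i ∈ S, (ℙ : Measure Ω) (B i) ≤ ∏ _i ∈ S, ENNReal.ofReal q :=
            Finset.prod_le_prod' (fun i _ => hq i)
        _ = ENNReal.ofReal q ^ S.card := Finset.prod_const _
    have hstep3 : (ℙ : Measure Ω) Ebad ≤ (n.choose k : ℝ≥0∞) * ENNReal.ofReal q ^ k := by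
      refine le_trans hstep1 (le_trans (Finset.sum_le_sum hstep2) ?_)
      rw [Finset.sum_const, nsmul_eq_mul, Finset.card_powersetCard, Finset.card_univ,
        Fintype.card_fin]
    refine le_trans hstep3 ?_
    rw [← ENNReal.ofReal_pow hqpos.le, ← ENNReal.ofReal_natCast, ← ENNReal.ofReal_mul (by positivity)]
    apply ENNReal.ofReal_le_ofReal
    -- real inequality
    have hchoose : (n.choose k : ℝ) ≤ 2 ^ n := by
      have h1 : n.choose k ≤ ∑ i ∈ Finset.range (n + 1), n.choose i :=
        Finset.single_le_sum (fun i _ => Nat.zero_le _) (Finset.mem_range.mpr (by omega))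
      rw [Nat.sum_range_choose] at h1
      exact_mod_cast h1
    have hq1 : q = Real.exp (Real.log 2 - 3) := by
      rw [hqdef, show Real.log 2 - 3 = Real.log 2 + (-3) by ring, Real.exp_add,
        Real.exp_log (by norm_num : (0:ℝ) < 2)]
    have h2n : (2:ℝ) ^ n = Real.exp (Real.log 2 * n) := by
      rw [mul_comm, Real.exp_nat_mul, Real.exp_log (by norm_num : (0:ℝ) < 2)]
    have hqk : q ^ k = Real.exp ((Real.log 2 - 3) * k) := by
      rw [hq1, mul_comm, Real.exp_nat_mul]
    calc (n.choose k : ℝ) * q ^ k ≤ 2 ^ n * q ^ k := by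
          apply mul_le_mul_of_nonneg_right hchoose (by positivity)
      _ = Real.exp (Real.log 2 * n + (Real.log 2 - 3) * k) := by
          rw [h2n, hqk, ← Real.exp_add]
      _ ≤ Real.exp (-(3 * (1 - Real.log 2) / 2) * n) := by
          apply Real.exp_le_exp.mpr
          nlinarith [mul_nonneg (sub_nonneg.mpr hk2) (by linarith : (0:ℝ) ≤ 3 - Real.log 2)]
  -- complement of Ebad is contained in the good event
  have hsubset : Ebadᶜ ⊆ {ω | Real.exp (-1) / 2 * n ≤ specNorm (Matrix.of fun i j : Fin n =>
      Real.exp (-a * ‖X i ω - X j ω‖ ^ 2))} := by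
    intro ω hω
    set T : Finset (Fin n) := Finset.univ.filter (fun i => R < ‖X i ω‖) with hTdef
    have hTk : T.card < k := by
      by_contra hcon
      push_neg at hcon
      obtain ⟨S, hST, hScard⟩ := Finset.exists_subset_card_eq hcon
      apply hω
      refine Set.mem_biUnion (Finset.mem_powersetCard.mpr ⟨Finset.subset_univ _, hScard⟩) ?_
      refine Set.mem_biInter fun i hi => ?_
      exact (Finset.mem_filter.mp (hST hi)).2
    set G : Finset (Fin n) := Tᶜ with hGdef
    have hGcard : n ≤ 2 * G.card := by
      have h1 : G.card = n - T.card := by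
        rw [hGdef, Finset.card_compl, Fintype.card_fin]
      omega
    have hGcardR : (n:ℝ) ≤ 2 * G.card := by exact_mod_cast hGcard
    have hGnorm : ∀ i ∈ G, ‖X i ω‖ ≤ R := by
      intro i hi
      have : i ∉ T := Finset.mem_compl.mp hi
      rw [hTdef, Finset.mem_filter] at this
      push_neg at this
      exact this (Finset.mem_univ i)
    have hGne : G.Nonempty := Finset.card_pos.mp (by omega)
    have hentry : ∀ i ∈ G, ∀ j ∈ G,
        Real.exp (-1) ≤ (Matrix.of fun i j : Fin n =>
          Real.exp (-a * ‖X i ω - X j ω‖ ^ 2)) i j := by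
      intro i hi j hj
      rw [Matrix.of_apply]
      apply Real.exp_le_exp.mpr
      have hij : ‖X i ω - X j ω‖ ≤ 2 * R :=
        le_trans (norm_sub_le _ _) (by linarith [hGnorm i hi, hGnorm j hj])
      have h0 : (0:ℝ) ≤ ‖X i ω - X j ω‖ := norm_nonneg _
      have hRsq : R ^ 2 = C * (d:ℝ) := Real.sq_sqrt hCd.le
      have hij2 : ‖X i ω - X j ω‖ ^ 2 ≤ 4 * (C * (d:ℝ)) := by
        have hb : ‖X i ω - X j ω‖ ^ 2 ≤ (2 * R) ^ 2 := by
          apply pow_le_pow_left₀ h0 hij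
        have hc : (2 * R) ^ 2 = 4 * (C * (d:ℝ)) := by rw [mul_pow, hRsq]; ring
        linarith
      have haCd : a * (4 * (C * (d:ℝ))) < 1 := by
        rw [div_div] at had
        have hpos : (0:ℝ) < 4 * C * (d:ℝ) := by positivity
        have h6 := (lt_div_iff₀ hpos).mp had
        calc a * (4 * (C * (d:ℝ))) = a * (4 * C * (d:ℝ)) := by ring
          _ < 1 := h6
      have h5 : a * ‖X i ω - X j ω‖ ^ 2 ≤ a * (4 * (C * (d:ℝ))) :=
        mul_le_mul_of_nonneg_left hij2 ha.le
      linarith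
    have hspec := le_specNorm_of_subset _ G hGne (Real.exp_nonneg _) hentry
    have hfin : Real.exp (-1) / 2 * n ≤ Real.exp (-1) * G.card := by
      calc Real.exp (-1) / 2 * n ≤ Real.exp (-1) / 2 * (2 * G.card) :=
            mul_le_mul_of_nonneg_left hGcardR (by positivity)
        _ = Real.exp (-1) * G.card := by ring
    exact le_trans hfin hspec
  -- conclude
  have h1 : (1:ℝ≥0∞) ≤ (ℙ : Measure Ω) Ebadᶜ + (ℙ : Measure Ω) Ebad := by
    calc (1:ℝ≥0∞) = (ℙ : Measure Ω) Set.univ := measure_univ.symm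
      _ = (ℙ : Measure Ω) (Ebadᶜ ∪ Ebad) := by rw [Set.compl_union_self]
      _ ≤ (ℙ : Measure Ω) Ebadᶜ + (ℙ : Measure Ω) Ebad := measure_union_le _ _
  have h2 : 1 - ENNReal.ofReal (Real.exp (-(3 * (1 - Real.log 2) / 2) * n))
      ≤ (ℙ : Measure Ω) Ebadᶜ := by
    rw [tsub_le_iff_right]
    exact le_trans h1 (add_le_add_right hEbad _)
  exact le_trans h2 (measure_mono hsubset)
end
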